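/- Let A be a symmetric positive definite M×M matrix with c = 1ᵀA1 and v = 1/(1ᵀA⁻¹1). Then M²(1 − v·Tr(A⁻¹)) + c·(Tr(A⁻¹) − v·1ᵀA⁻²1) ≥ 0. -/

import Mathlib

open Matrix

lemma Cnonneg {M : ℕ} (x : Fin M → ℝ) (hx : ∀ i, 0 < x i) (i k : Fin M) :
    0 ≤ (x i * (x k)⁻¹ * (∑ j, x j) - (x i)^2 * (x k)⁻¹ + M * x i - (∑ j, x j))
      + (x k * (x i)⁻¹ * (∑ j, x j) - (x k)^2 * (x i)⁻¹ + M * x k - (∑ j, x j)) := by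
  have hM : 1 ≤ (M : ℝ) := by exact_mod_cast i.pos
  have hxi := hx i
  have hxk := hx k
  rcases eq_or_ne i k with rfl | hik
  · have hT : x i ≤ ∑ j, x j :=
      Finset.single_le_sum (fun j _ => (hx j).le) (Finset.mem_univ i)
    have : (x i) * (x i)⁻¹ = 1 := mul_inv_cancel₀ hxi.ne'
    nlinarith [hxi, hT]
  · have h2M : 2 ≤ (M : ℝ) := by
      have h2 : 2 ≤ M := by
        rcases Nat.lt_or_ge M 2 with h | h
        · exfalso
          have : Subsingleton (Fin M) := by
            interval_cases M
            · exact Fin.subsingleton_zero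
            · exact Fin.subsingleton_one
          exact hik (Subsingleton.elim i k)
        · exact h
      exact_mod_cast h2
    have hT : x i + x k ≤ ∑ j, x j := by
      have := Finset.sum_le_sum_of_subset_of_nonneg
        (Finset.subset_univ ({i, k} : Finset (Fin M))) (fun j _ _ => (hx j).le)
      rwa [Finset.sum_pair hik] at this
    set T := ∑ j, x j with hTdef
    have hexpand : ((x i * (x k)⁻¹ * T - (x i)^2 * (x k)⁻¹ + M * x i - T)
      + (x k * (x i)⁻¹ * T - (x k)^2 * (x i)⁻¹ + M * x k - T)) * (x i * x k)
        = T * (x i - x k)^2 + (x i + x k) * ((M:ℝ) * (x i * x k) - x i^2 + x i * x k - x k^2) := by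
      field_simp
      ring
    have hE : (0:ℝ) * (x i * x k) ≤ ((x i * (x k)⁻¹ * T - (x i)^2 * (x k)⁻¹ + M * x i - T)
      + (x k * (x i)⁻¹ * T - (x k)^2 * (x i)⁻¹ + M * x k - T)) * (x i * x k) := by
      rw [hexpand, zero_mul]
      nlinarith [mul_nonneg (sub_nonneg.2 hT) (sq_nonneg (x i - x k)),
        mul_pos (mul_pos hxi hxk) (add_pos hxi hxk), sq_nonneg (x i - x k)]
    exact le_of_mul_le_mul_right hE (mul_pos hxi hxk)


lemma core {M : ℕ} (x p : Fin M → ℝ) (hx : ∀ i, 0 < x i) (hp : ∀ i, 0 ≤ p i)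
    (hsum : ∑ i, p i = (M:ℝ)) :
    0 ≤ (M:ℝ)^2 * ((∑ i, x i * p i) - (∑ i, x i))
      + (∑ i, (x i)⁻¹ * p i) * ((∑ i, x i * p i) * (∑ i, x i) - ∑ i, (x i * x i) * p i) := by
  set T := ∑ j, x j with hT
  set S1 := ∑ i, x i * p i with hS1
  set Sv := ∑ i, (x i)⁻¹ * p i with hSv
  set S2 := ∑ i, (x i * x i) * p i with hS2
  set P := ∑ i, p i with hP
  have hdouble : 0 ≤ ∑ i, ∑ k, p i * p k *
      ((x i * (x k)⁻¹ * T - (x i)^2 * (x k)⁻¹ + M * x i - T)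
        + (x k * (x i)⁻¹ * T - (x k)^2 * (x i)⁻¹ + M * x k - T)) := by
    refine Finset.sum_nonneg fun i _ => Finset.sum_nonneg fun k _ => ?_
    exact mul_nonneg (mul_nonneg (hp i) (hp k)) (Cnonneg x hx i k)
  have step1 : ∀ i : Fin M, ∑ k, (p i * p k *
      ((x i * (x k)⁻¹ * T - (x i)^2 * (x k)⁻¹ + M * x i - T)
        + (x k * (x i)⁻¹ * T - (x k)^2 * (x i)⁻¹ + M * x k - T)))
      = (p i * (M * x i - 2*T)) * P + (p i * (T * (x i)⁻¹ + M)) * S1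
        + (p i * (T * x i - x i * x i)) * Sv + (-(p i * (x i)⁻¹)) * S2 := by
    intro i
    calc ∑ k, (p i * p k *
        ((x i * (x k)⁻¹ * T - (x i)^2 * (x k)⁻¹ + M * x i - T)
          + (x k * (x i)⁻¹ * T - (x k)^2 * (x i)⁻¹ + M * x k - T)))
        = ∑ k, ((p i * (M * x i - 2*T)) * p k + (p i * (T * (x i)⁻¹ + M)) * (x k * p k)
            + (p i * (T * x i - x i * x i)) * ((x k)⁻¹ * p k)
            + (-(p i * (x i)⁻¹)) * ((x k * x k) * p k)) := by
          refine Finset.sum_congr rfl fun k _ => ?_; ring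
      _ = (p i * (M * x i - 2*T)) * P + (p i * (T * (x i)⁻¹ + M)) * S1
            + (p i * (T * x i - x i * x i)) * Sv + (-(p i * (x i)⁻¹)) * S2 := by
          simp only [Finset.sum_add_distrib, ← Finset.mul_sum, hS1, hSv, hS2, hP]
  rw [Finset.sum_congr rfl (fun i _ => step1 i)] at hdouble
  have step2 : ∑ i, ((p i * (M * x i - 2*T)) * P + (p i * (T * (x i)⁻¹ + M)) * S1
        + (p i * (T * x i - x i * x i)) * Sv + (-(p i * (x i)⁻¹)) * S2)
      = ((M:ℝ) * S1 - 2*T*P) * P + (T * Sv + M * P) * S1 + (T * S1 - S2) * Sv + (-Sv) * S2 := by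
    calc ∑ i, ((p i * (M * x i - 2*T)) * P + (p i * (T * (x i)⁻¹ + M)) * S1
          + (p i * (T * x i - x i * x i)) * Sv + (-(p i * (x i)⁻¹)) * S2)
        = ∑ i, (((M:ℝ) * (x i * p i) - 2*T * p i) * P
            + (T * ((x i)⁻¹ * p i) + M * p i) * S1
            + (T * (x i * p i) - (x i * x i) * p i) * Sv
            + (-((x i)⁻¹ * p i)) * S2) := by
          refine Finset.sum_congr rfl fun i _ => ?_; ring
      _ = ((M:ℝ) * S1 - 2*T*P) * P + (T * Sv + M * P) * S1 + (T * S1 - S2) * Sv + (-Sv) * S2 := by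
          simp only [Finset.sum_add_distrib, Finset.sum_sub_distrib, ← Finset.mul_sum,
            ← Finset.sum_mul, Finset.sum_neg_distrib, hS1, hSv, hS2, hP]
  rw [step2, hsum] at hdouble
  nlinarith [hdouble]


open Matrix Finset


/-- For a symmetric positive definite `A` with `c = 1ᵀA1` and `v = 1/(1ᵀA⁻¹1)`:
`M²(1 − v·Tr(A⁻¹)) + c·(Tr(A⁻¹) − v·1ᵀA⁻²1) ≥ 0`. -/
theorem trace_ineq {M : ℕ} (A : Matrix (Fin M) (Fin M) ℝ) (hA : A.PosDef) :
    0 ≤ (M : ℝ) ^ 2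
          * (1 - (1 / ((1 : Fin M → ℝ) ⬝ᵥ (A⁻¹ *ᵥ (1 : Fin M → ℝ)))) * (A⁻¹).trace)
        + ((1 : Fin M → ℝ) ⬝ᵥ (A *ᵥ (1 : Fin M → ℝ)))
          * ((A⁻¹).trace
            - (1 / ((1 : Fin M → ℝ) ⬝ᵥ (A⁻¹ *ᵥ (1 : Fin M → ℝ))))
                * ((1 : Fin M → ℝ) ⬝ᵥ ((A⁻¹ * A⁻¹) *ᵥ (1 : Fin M → ℝ)))) := by
  rcases Nat.eq_zero_or_pos M with hM0 | hM0
  · subst hM0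
    simp [Matrix.trace, dotProduct]
  have hH : A.IsHermitian := hA.1
  set U : Matrix (Fin M) (Fin M) ℝ := (hH.eigenvectorUnitary : Matrix (Fin M) (Fin M) ℝ) with hUdef
  have hUU : U * star U = 1 := mem_unitaryGroup_iff.mp hH.eigenvectorUnitary.2
  have hUU' : star U * U = 1 := mem_unitaryGroup_iff'.mp hH.eigenvectorUnitary.2
  set lam : Fin M → ℝ := hH.eigenvalues with hlamdef
  have hlam : ∀ i, 0 < lam i := fun i => hA.eigenvalues_pos i
  have hofReal : (RCLike.ofReal ∘ hH.eigenvalues : Fin M → ℝ) = lam := by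
    funext i; simp [hlamdef]
  have hspec : A = U * diagonal lam * star U := by
    have := hH.spectral_theorem
    rwa [hofReal] at this
  -- A⁻¹ = U * diagonal lam⁻¹ * Uᴴ
  have hDD : diagonal lam * diagonal (fun i => (lam i)⁻¹) = 1 := by
    rw [diagonal_mul_diagonal]
    convert diagonal_one
    exact mul_inv_cancel₀ (hlam _).ne'
  have hAinv : A⁻¹ = U * diagonal (fun i => (lam i)⁻¹) * star U := by
    apply inv_eq_right_inv
    calc A * (U * diagonal (fun i => (lam i)⁻¹) * star U)
        = U * diagonal lam * ((star U * U) * (diagonal (fun i => (lam i)⁻¹) * star U)) := by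
          rw [hspec]; simp only [Matrix.mul_assoc]
      _ = U * (diagonal lam * diagonal (fun i => (lam i)⁻¹)) * star U := by
          rw [hUU', Matrix.one_mul]; simp only [Matrix.mul_assoc]
      _ = 1 := by rw [hDD, Matrix.mul_one, hUU]
  have hAinv2 : A⁻¹ * A⁻¹ = U * diagonal (fun i => (lam i)⁻¹ * (lam i)⁻¹) * star U := by
    rw [hAinv]
    calc U * diagonal (fun i => (lam i)⁻¹) * star U * (U * diagonal (fun i => (lam i)⁻¹) * star U)
        = U * diagonal (fun i => (lam i)⁻¹) * ((star U * U) * (diagonal (fun i => (lam i)⁻¹) * star U)) := by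
          simp only [Matrix.mul_assoc]
      _ = U * (diagonal (fun i => (lam i)⁻¹) * diagonal (fun i => (lam i)⁻¹)) * star U := by
          rw [hUU', Matrix.one_mul]; simp only [Matrix.mul_assoc]
      _ = U * diagonal (fun i => (lam i)⁻¹ * (lam i)⁻¹) * star U := by
          rw [diagonal_mul_diagonal]
  -- trace
  have htrace : (A⁻¹).trace = ∑ i, (lam i)⁻¹ := by
    rw [hAinv, trace_mul_cycle, hUU', Matrix.one_mul, trace_diagonal]
  -- quadratic forms
  set w : Fin M → ℝ := (star U) *ᵥ (1 : Fin M → ℝ) with hwdef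
  have hQuad : ∀ d : Fin M → ℝ,
      (1 : Fin M → ℝ) ⬝ᵥ ((U * diagonal d * star U) *ᵥ (1 : Fin M → ℝ))
        = ∑ i, d i * (w i)^2 := by
    intro d
    rw [← Matrix.mulVec_mulVec, ← Matrix.mulVec_mulVec, Matrix.dotProduct_mulVec]
    have h1U : (1 : Fin M → ℝ) ᵥ* U = w := by
      rw [hwdef, Matrix.star_eq_conjTranspose, conjTranspose_eq_transpose_of_trivial,
        Matrix.mulVec_transpose]
    rw [h1U]
    simp only [dotProduct, Matrix.mulVec_diagonal]
    exact Finset.sum_congr rfl fun i _ => by ring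
  have hwsum : ∑ i, (w i)^2 = (M:ℝ) := by
    have h := hQuad (fun _ => 1)
    simp only [diagonal_one, Matrix.mul_one, hUU, Matrix.one_mulVec, one_mul] at h
    rw [← h]
    simp [dotProduct]
  have hc : (1 : Fin M → ℝ) ⬝ᵥ (A *ᵥ (1 : Fin M → ℝ)) = ∑ i, lam i * (w i)^2 := by
    rw [hspec]; exact hQuad lam
  have hs : (1 : Fin M → ℝ) ⬝ᵥ (A⁻¹ *ᵥ (1 : Fin M → ℝ)) = ∑ i, (lam i)⁻¹ * (w i)^2 := by
    rw [hAinv]; exact hQuad _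
  have hu : (1 : Fin M → ℝ) ⬝ᵥ ((A⁻¹ * A⁻¹) *ᵥ (1 : Fin M → ℝ))
      = ∑ i, ((lam i)⁻¹ * (lam i)⁻¹) * (w i)^2 := by
    rw [hAinv2]; exact hQuad _
  -- positivity of s
  have hspos : 0 < ∑ i, (lam i)⁻¹ * (w i)^2 := by
    have h1ne : (1 : Fin M → ℝ) ≠ 0 := by
      intro h
      have := congrFun h ⟨0, hM0⟩
      simp at this
    have := hA.inv.dotProduct_mulVec_pos h1ne
    rw [← hs]
    simpa using this
  -- core inequality
  have hcore := core (fun i => (lam i)⁻¹) (fun i => (w i)^2)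
    (fun i => inv_pos.2 (hlam i)) (fun i => sq_nonneg _) hwsum
  simp only [inv_inv] at hcore
  rw [hc, hs, htrace, hu]
  set s := ∑ i, (lam i)⁻¹ * (w i)^2
  set c := ∑ i, lam i * (w i)^2
  set T := ∑ i, (lam i)⁻¹
  set u := ∑ i, ((lam i)⁻¹ * (lam i)⁻¹) * (w i)^2
  have hrw : (M:ℝ)^2 * (1 - 1/s * T) + c * (T - 1/s * u)
      = ((M:ℝ)^2 * (s - T) + c * (s * T - u)) / s := by
    rw [eq_div_iff hspos.ne']
    field_simp
  rw [hrw]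
  exact div_nonneg (by linarith [hcore]) hspos.le
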